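/- Let P = {p_1,…,p_m} be a finite set in a metric space with optimal 1-median x* and optimal cost OPT = cost(x*,P). Suppose the number of points p ∈ P with cost(p,P) ≤ (2−α)·OPT is at most δ·m, where α ∈ (0,1] and δ ∈ [0, 1−α]. If Q is a uniformly random subset of P of size r ≥ 2, then E_Q[Δ(x*,Q)] ≤ C(r,2)·(α + 2δ)·OPT. -/

import Mathlib

open Finset in
private lemma count_pairs {X : Type*} [DecidableEq X] (P : Finset X) (r : ℕ)
    (a b : X) (ha : a ∈ P) (hb : b ∈ P) (hab : a ≠ b) (hr : 2 ≤ r) :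
    ((P.powersetCard r).filter (fun Q => a ∈ Q ∧ b ∈ Q)).card
      = (P.card - 2).choose (r - 2) := by
  have habP : ({a, b} : Finset X) ⊆ P := by
    intro x hx; simp only [mem_insert, mem_singleton] at hx
    rcases hx with rfl | rfl <;> assumption
  have hcab : ({a, b} : Finset X).card = 2 := by
    rw [card_insert_of_notMem (by simpa using hab), card_singleton]
  have hcard : (P \ {a, b}).card = P.card - 2 := by
    rw [card_sdiff_of_subset habP, hcab]
  rw [← hcard, ← card_powersetCard]
  apply Finset.card_nbij' (fun Q => Q \ {a, b}) (fun S => insert a (insert b S))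
  · intro Q hQ
    simp only [mem_coe, mem_filter, mem_powersetCard] at hQ
    obtain ⟨⟨hQP, hQr⟩, haQ, hbQ⟩ := hQ
    have habQ : ({a, b} : Finset X) ⊆ Q := by
      intro x hx; simp only [mem_insert, mem_singleton] at hx
      rcases hx with rfl | rfl <;> assumption
    rw [mem_coe, mem_powersetCard]
    exact ⟨sdiff_subset_sdiff hQP le_rfl, by rw [card_sdiff_of_subset habQ, hQr, hcab]⟩
  · intro S hS
    rw [mem_coe, mem_powersetCard] at hS
    obtain ⟨hSP, hSr⟩ := hS
    have haS : a ∉ S := fun h => by simpa using (hSP h)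
    have hbS : b ∉ S := fun h => by simpa using (hSP h)
    simp only [mem_coe, mem_filter, mem_powersetCard]
    refine ⟨⟨?_, ?_⟩, by simp, by simp⟩
    · intro x hx
      simp only [mem_insert] at hx
      rcases hx with rfl | rfl | hx
      · exact ha
      · exact hb
      · exact (sdiff_subset (hSP hx))
    · rw [card_insert_of_notMem (by simp [haS, hab]),
        card_insert_of_notMem hbS, hSr]
      omega
  · intro Q hQ
    simp only [mem_coe, mem_filter] at hQ
    obtain ⟨-, haQ, hbQ⟩ := hQ
    ext x
    simp only [mem_insert, mem_sdiff, mem_singleton]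
    constructor
    · rintro (rfl | rfl | ⟨h, -⟩) <;> assumption
    · intro hx
      by_cases h1 : x = a
      · exact Or.inl h1
      by_cases h2 : x = b
      · exact Or.inr (Or.inl h2)
      · exact Or.inr (Or.inr ⟨hx, by tauto⟩)
  · intro S hS
    rw [mem_coe, mem_powersetCard] at hS
    have haS : a ∉ S := fun h => by simpa using (hS.1 h)
    have hbS : b ∉ S := fun h => by simpa using (hS.1 h)
    ext x
    simp only [mem_sdiff, mem_insert, mem_singleton]
    constructor
    · rintro ⟨rfl | rfl | hx, h⟩ <;> tauto
    · intro hx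
      exact ⟨Or.inr (Or.inr hx), by rintro (rfl | rfl) <;> tauto⟩


open Finset in
private lemma swap_sum {X : Type*} [DecidableEq X] (P : Finset X) (r : ℕ) (f : X × X → ℝ) :
    ∑ Q ∈ P.powersetCard r, ∑ pq ∈ Q.offDiag, f pq
      = ∑ pq ∈ P.offDiag,
          (((P.powersetCard r).filter (fun Q => pq.1 ∈ Q ∧ pq.2 ∈ Q)).card : ℝ) * f pq := by
  have key : ∀ Q ∈ P.powersetCard r, ∑ pq ∈ Q.offDiag, f pq
      = ∑ pq ∈ P.offDiag, if pq.1 ∈ Q ∧ pq.2 ∈ Q then f pq else 0 := by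
    intro Q hQ
    rw [mem_powersetCard] at hQ
    rw [← Finset.sum_filter]
    apply Finset.sum_congr _ (fun _ _ => rfl)
    ext pq
    simp only [mem_offDiag, mem_filter]
    constructor
    · rintro ⟨h1, h2, h3⟩
      exact ⟨⟨hQ.1 h1, hQ.1 h2, h3⟩, h1, h2⟩
    · rintro ⟨⟨-, -, h3⟩, h1, h2⟩
      exact ⟨h1, h2, h3⟩
  rw [Finset.sum_congr rfl key, Finset.sum_comm]
  refine Finset.sum_congr rfl fun pq _ => ?_
  rw [← Finset.sum_filter, Finset.sum_const, nsmul_eq_mul]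

open Finset in
set_option maxHeartbeats 1000000 in
open Classical in
/-- If at most `δ·m` points of `P` have cost at most `(2−α)·OPT`, then a uniformly
random `r`-subset `Q` of `P` satisfies `E[Δ(x*,Q)] ≤ C(r,2)·(α+2δ)·OPT`. -/
theorem expected_slack_bound {X : Type*} [MetricSpace X] [DecidableEq X]
    (P : Finset X) (m : ℕ) (hm : P.card = m) (hm0 : 0 < m)
    (cost : X → ℝ) (hcost : ∀ x, cost x = (m : ℝ)⁻¹ * ∑ p ∈ P, dist x p)
    (xstar : X) (hxstar : ∀ x, cost xstar ≤ cost x)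
    (OPT : ℝ) (hOPT : OPT = cost xstar)
    (Δ : Finset X → ℝ)
    (hΔ : ∀ Q, Δ Q = (1 / 2) *
      ∑ pq ∈ Q.offDiag, (dist xstar pq.1 + dist xstar pq.2 - dist pq.1 pq.2))
    (α δ : ℝ) (hα0 : 0 < α) (hα1 : α ≤ 1) (hδ0 : 0 ≤ δ) (hδ : δ ≤ 1 - α)
    (hfew : (((P.filter (fun p => cost p ≤ (2 - α) * OPT)).card : ℝ)) ≤ δ * m)
    (r : ℕ) (hr2 : 2 ≤ r) (hrm : r ≤ m) :
    ((P.powersetCard r).card : ℝ)⁻¹ * ∑ Q ∈ P.powersetCard r, Δ Q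
      ≤ (r.choose 2 : ℝ) * (α + 2 * δ) * OPT := by
  have hmR : (0:ℝ) < m := by exact_mod_cast hm0
  have hm2 : (2:ℝ) ≤ m := by exact_mod_cast hr2.trans hrm
  have hOPT0 : 0 ≤ OPT := by
    rw [hOPT, hcost]
    have h : (0:ℝ) ≤ ∑ p ∈ P, dist xstar p := Finset.sum_nonneg fun p _ => dist_nonneg
    positivity
  have hD : ∑ p ∈ P, dist xstar p = m * OPT := by
    rw [hOPT, hcost]; field_simp
  have hcostsum : ∀ p, ∑ q ∈ P, dist p q = m * cost p := by
    intro p; rw [hcost]; field_simp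
  -- lower bound on total cost
  set N := P.filter (fun p => cost p ≤ (2 - α) * OPT) with hNdef
  have hNle : (N.card : ℝ) ≤ δ * m := hfew
  have hNP : N ⊆ P := filter_subset _ _
  have hNcard : N.card ≤ m := hm ▸ card_le_card hNP
  have hcostlb : (m : ℝ) * ((2 - α) * OPT) - (N.card : ℝ) * ((1 - α) * OPT)
      ≤ ∑ p ∈ P, cost p := by
    have hsplit : ∑ p ∈ P, cost p = ∑ p ∈ N, cost p + ∑ p ∈ P \ N, cost p := by
      rw [Finset.sum_sdiff_eq_sub hNP]; ring
    have h1 : (N.card : ℝ) * OPT ≤ ∑ p ∈ N, cost p := by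
      calc (N.card : ℝ) * OPT = ∑ _p ∈ N, OPT := by rw [Finset.sum_const, nsmul_eq_mul]
        _ ≤ ∑ p ∈ N, cost p := Finset.sum_le_sum fun p _ => hOPT ▸ hxstar p
    have h2 : ((P \ N).card : ℝ) * ((2 - α) * OPT) ≤ ∑ p ∈ P \ N, cost p := by
      calc ((P \ N).card : ℝ) * ((2 - α) * OPT) = ∑ _p ∈ P \ N, (2 - α) * OPT := by
            rw [Finset.sum_const, nsmul_eq_mul]
        _ ≤ ∑ p ∈ P \ N, cost p := by
            refine Finset.sum_le_sum fun p hp => ?_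
            rw [mem_sdiff, hNdef, mem_filter] at hp
            have h3 := hp.2
            push_neg at h3
            exact le_of_lt (h3 hp.1)
    have hc : ((P \ N).card : ℝ) = (m : ℝ) - N.card := by
      rw [card_sdiff_of_subset hNP, hm, Nat.cast_sub (hm ▸ hNcard)]
    rw [hsplit]
    rw [hc] at h2
    nlinarith [h1, h2]
  -- total slack bound
  have hS : ∑ pq ∈ P.offDiag, (dist xstar pq.1 + dist xstar pq.2 - dist pq.1 pq.2)
      ≤ (m : ℝ) * ((m : ℝ) - 1) * (α + 2 * δ) * OPT := by
    have hprod : ∑ pq ∈ P ×ˢ P, (dist xstar pq.1 + dist xstar pq.2 - dist pq.1 pq.2)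
        = 2 * m * (m * OPT) - (m : ℝ) * ∑ p ∈ P, cost p := by
      rw [Finset.sum_product]
      have h1 : ∀ p ∈ P, ∑ q ∈ P, (dist xstar p + dist xstar q - dist p q)
          = (m : ℝ) * dist xstar p + m * OPT - m * cost p := by
        intro p hp
        rw [Finset.sum_sub_distrib, Finset.sum_add_distrib, Finset.sum_const, hD,
          hcostsum p, nsmul_eq_mul, hm]
      rw [Finset.sum_congr rfl h1, Finset.sum_sub_distrib, Finset.sum_add_distrib,
        Finset.sum_const, ← Finset.mul_sum, hD, ← Finset.mul_sum, nsmul_eq_mul, hm]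
      ring
    have hdiag : ∑ pq ∈ P.diag, (dist xstar pq.1 + dist xstar pq.2 - dist pq.1 pq.2)
        = 2 * (m * OPT) := by
      rw [Finset.sum_diag]
      simp only [dist_self, sub_zero]
      simp_rw [← two_mul]
      rw [← Finset.mul_sum, hD]
    have hsplit : ∑ pq ∈ P.offDiag, (dist xstar pq.1 + dist xstar pq.2 - dist pq.1 pq.2)
        = (2 * m * (m * OPT) - (m : ℝ) * ∑ p ∈ P, cost p) - 2 * (m * OPT) := by
      rw [← hprod, ← hdiag, ← Finset.product_sdiff_diag,
        Finset.sum_sdiff_eq_sub (fun pq hpq => ?_)]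
      rw [Finset.mem_diag] at hpq
      rw [Finset.mem_product]
      exact ⟨hpq.1, hpq.2 ▸ hpq.1⟩
    rw [hsplit]
    have key : (m:ℝ) * ((m : ℝ) * ((2 - α) * OPT) - (δ * m) * ((1 - α) * OPT))
        ≤ (m:ℝ) * ∑ p ∈ P, cost p := by
      have h3 : (N.card : ℝ) * ((1 - α) * OPT) ≤ (δ * m) * ((1 - α) * OPT) := by
        apply mul_le_mul_of_nonneg_right hNle
        nlinarith
      nlinarith [hcostlb]
    nlinarith [key,
      mul_nonneg (mul_nonneg (mul_nonneg hmR.le hδ0) hmR.le) (mul_nonneg hα0.le hOPT0),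
      mul_nonneg (mul_nonneg hmR.le hδ0) (mul_nonneg hmR.le hOPT0),
      mul_nonneg hmR.le (mul_nonneg hOPT0 (by nlinarith : (0:ℝ) ≤ 2 - α - 2*δ))]
  -- rewrite the sum of Δ
  set c : ℝ := ((m - 2).choose (r - 2) : ℝ) with hcdef
  have hc0 : 0 ≤ c := by positivity
  have hsumΔ : ∑ Q ∈ P.powersetCard r, Δ Q
      = (1 / 2) * c * ∑ pq ∈ P.offDiag,
          (dist xstar pq.1 + dist xstar pq.2 - dist pq.1 pq.2) := by
    have h0 : ∑ Q ∈ P.powersetCard r, Δ Q = (1/2) * ∑ Q ∈ P.powersetCard r,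
        ∑ pq ∈ Q.offDiag, (dist xstar pq.1 + dist xstar pq.2 - dist pq.1 pq.2) := by
      rw [Finset.mul_sum]
      exact Finset.sum_congr rfl fun Q _ => hΔ Q
    rw [h0, swap_sum]
    rw [Finset.mul_sum, Finset.mul_sum]
    refine Finset.sum_congr rfl fun pq hpq => ?_
    rw [mem_offDiag] at hpq
    rw [count_pairs P r pq.1 pq.2 hpq.1 hpq.2.1 hpq.2.2 hr2, hm]
    ring
  -- choose identity
  have hchoose : (m.choose r : ℝ) * (r.choose 2 : ℝ) = ((m : ℝ) * ((m:ℝ) - 1) / 2) * c := by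
    have h := Nat.choose_mul (n := m) hr2
    have h2 := congrArg (Nat.cast (R := ℝ)) h
    push_cast at h2
    rw [h2, Nat.cast_choose_two]
  have hpos : (0:ℝ) < (m.choose r : ℝ) := by
    exact_mod_cast Nat.choose_pos hrm
  rw [hsumΔ, card_powersetCard, hm]
  calc (m.choose r : ℝ)⁻¹ * (1 / 2 * c * ∑ pq ∈ P.offDiag,
        (dist xstar pq.1 + dist xstar pq.2 - dist pq.1 pq.2))
      ≤ (m.choose r : ℝ)⁻¹ * (1 / 2 * c * ((m : ℝ) * ((m : ℝ) - 1) * (α + 2 * δ) * OPT)) := by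
        apply mul_le_mul_of_nonneg_left _ (by positivity)
        apply mul_le_mul_of_nonneg_left hS (by positivity)
    _ = (r.choose 2 : ℝ) * (α + 2 * δ) * OPT := by
        rw [show (1 / 2 * c * ((m : ℝ) * ((m : ℝ) - 1) * (α + 2 * δ) * OPT))
            = ((m : ℝ) * ((m : ℝ) - 1) / 2 * c) * ((α + 2 * δ) * OPT) by ring, ← hchoose]
        field_simp
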